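/- CES fails Demand Monotonicity: Let D be the uniform distribution on the three points (1,1), (1,0), (0,1) in ℝ², and let f(u, v) = 100·u + v, which is nondecreasing in the second feature. Then the CES attribution of the second feature at explicand (1,1) is strictly less than its CES attribution at explicand (1,0), even though the two explicands differ only in the second feature and its value increased from 0 to 1: ces_2((1,1), D, f) < 0 < ces_2((1,0), D, f). -/
import Mathlib


open scoped Classical

noncomputable def shapley {N : Type*} [Fintype N] [DecidableEq N]
    (v : Finset N → ℝ) (i : N) : ℝ :=
  ∑ S ∈ (Finset.univ.erase i).powerset,
    ((S.card.factorial : ℝ) * ((Fintype.card N - S.card - 1).factorial) /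
      (Fintype.card N).factorial) * (v (insert i S) - v S)


noncomputable def condExp {N : Type*} [Fintype N] [DecidableEq N]
    (T : Finset (N → ℝ)) (p : (N → ℝ) → ℝ) (f : (N → ℝ) → ℝ)
    (x : N → ℝ) (S : Finset N) : ℝ :=
  (∑ t ∈ T.filter fun t => ∀ j ∈ S, t j = x j, p t * f t) /
  (∑ t ∈ T.filter fun t => ∀ j ∈ S, t j = x j, p t)

noncomputable def ces {N : Type*} [Fintype N] [DecidableEq N]
    (T : Finset (N → ℝ)) (p : (N → ℝ) → ℝ) (x : N → ℝ)
    (f : (N → ℝ) → ℝ) (i : N) : ℝ :=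
  shapley (fun S => condExp T p f x S) i


/-- **CES fails Demand Monotonicity** (Table 2 of the paper): for the uniform
distribution on `{(1,1), (1,0), (0,1)}` and the monotone model
`f (u,v) = 100u + v`, increasing the second feature's value from `0` to `1`
(all else fixed) moves its CES attribution from positive to negative. -/
theorem ces_fails_demand_monotonicity :
    ces ({![1,1], ![1,0], ![0,1]} : Finset (Fin 2 → ℝ)) (fun _ => (1 : ℝ) / 3)
        ![1,1] (fun t => 100 * t 0 + t 1) 1 < 0 ∧
    0 < ces ({![1,1], ![1,0], ![0,1]} : Finset (Fin 2 → ℝ)) (fun _ => (1 : ℝ) / 3)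
        ![1,0] (fun t => 100 * t 0 + t 1) 1 := by
  have h1 : (![1,1] : Fin 2 → ℝ) ≠ ![1,0] := by intro h; have := congrFun h 1; norm_num at this
  have h2 : (![1,1] : Fin 2 → ℝ) ≠ ![0,1] := by intro h; have := congrFun h 0; norm_num at this
  have h3 : (![1,0] : Fin 2 → ℝ) ≠ ![0,1] := by intro h; have := congrFun h 0; norm_num at this
  have hpow : ((Finset.univ.erase (1 : Fin 2)).powerset : Finset (Finset (Fin 2))) = {∅, {0}} := by
    decide
  constructor <;>
  · simp only [ces, shapley, hpow, condExp]
    norm_num [Finset.filter_insert, Finset.filter_singleton, Finset.forall_mem_insert,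
      h1, h2, h3, Finset.sum_insert, Finset.mem_insert,
      Finset.sum_pair (show (∅ : Finset (Fin 2)) ≠ {0} by decide),
      Finset.mem_singleton, Finset.notMem_empty,
      Matrix.cons_val_zero, Matrix.cons_val_one, Matrix.head_cons]
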